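/- For the operator composition of kernels against Lebesgue measure, ((z̄'_i 𝒫) ∘ (z_j 𝒫))(Z,Z') = (1/π) δ_{ij} 𝒫(Z,Z') + z̄'_i z_j 𝒫(Z,Z'); that is, in the notation 𝒦[F,G], one has 𝒦[z̄'_i, z_j] = (1/π) δ_{ij} + z̄'_i z_j. -/

import Mathlib

open MeasureTheory Complex

/-- The model Bergman kernel on `ℂⁿ × ℂⁿ`. -/
noncomputable def Pker (n : ℕ) (z z' : Fin n → ℂ) : ℂ :=
  Complex.exp (-(Real.pi : ℂ)/2 *
    ∑ k, ((‖z k‖ : ℂ)^2 + (‖z' k‖ : ℂ)^2 - 2 * z k * (starRingEnd ℂ) (z' k)))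


noncomputable section

private lemma hbre : (-(Real.pi:ℂ)).re < 0 := by simp [Real.pi_pos]

private lemma norm_cexp' (w : ℂ) : ‖cexp w‖ = Real.exp w.re := Complex.norm_exp w

private lemma re_quad (c d : ℂ) (x : ℝ) : (-(Real.pi:ℂ) * x ^ 2 + c * x + d).re
    = -Real.pi * x ^ 2 + c.re * x + d.re := by
  simp [Complex.add_re, Complex.mul_re, ← Complex.ofReal_pow]

private lemma abs_pow_le (k : ℕ) (x : ℝ) : |x| ^ k ≤ Real.exp (k * x) + Real.exp (-(k * x)) := by
  have h1 : |x| ^ k ≤ Real.exp (k * |x|) := by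
    calc |x| ^ k ≤ (Real.exp |x|) ^ k :=
          pow_le_pow_left₀ (abs_nonneg x) (Real.add_one_le_exp |x| |>.trans' (by linarith)) k
      _ = Real.exp (k * |x|) := by rw [← Real.exp_nat_mul]
  rcases le_or_gt 0 x with hx | hx
  · rw [_root_.abs_of_nonneg hx] at h1 ⊢
    exact h1.trans (le_add_of_nonneg_right (Real.exp_pos _).le)
  · rw [abs_of_neg hx] at h1 ⊢
    rw [mul_neg, ← neg_mul] at h1
    rw [neg_mul] at h1
    exact h1.trans (le_add_of_nonneg_left (Real.exp_pos _).le)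

private lemma integrable_pow_cexp (k : ℕ) (c d : ℂ) :
    Integrable fun x : ℝ => (x:ℂ) ^ k * cexp (-(Real.pi:ℂ) * x ^ 2 + c * x + d) := by
  have h1 := (integrable_cexp_quadratic' hbre (c + k) d).norm
  have h2 := (integrable_cexp_quadratic' hbre (c - k) d).norm
  refine Integrable.mono' (h1.add h2) ?_ (Filter.Eventually.of_forall fun x => ?_)
  · exact (Continuous.aestronglyMeasurable (by fun_prop))
  · rw [norm_mul, norm_pow]
    simp only [norm_cexp', Complex.norm_real, Real.norm_eq_abs]
    rw [re_quad]
    calc |x| ^ k * Real.exp (-Real.pi * x ^ 2 + c.re * x + d.re)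
        ≤ (Real.exp (k*x) + Real.exp (-(k*x))) * Real.exp (-Real.pi * x ^ 2 + c.re * x + d.re) :=
          mul_le_mul_of_nonneg_right (abs_pow_le k x) (Real.exp_pos _).le
      _ ≤ _ := by
          simp only [Pi.add_apply]
          rw [add_mul, ← Real.exp_add, ← Real.exp_add, re_quad, re_quad]
          simp only [Complex.add_re, Complex.sub_re, Complex.natCast_re]
          apply add_le_add <;> apply le_of_eq <;> { congr 1; ring }

end

noncomputable section

private lemma hπ : (Real.pi:ℂ) ≠ 0 := by exact_mod_cast Real.pi_ne_zero

private lemma integral_quad (c d : ℂ) :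
    ∫ x : ℝ, cexp (-(Real.pi:ℂ) * x ^ 2 + c * x + d) = cexp (d + c ^ 2 / (4 * Real.pi)) := by
  rw [integral_cexp_quadratic hbre c d, neg_neg, div_self hπ, one_cpow, one_mul]
  congr 1
  ring

private lemma hasDerivAt_quad (c d : ℂ) (x : ℝ) :
    HasDerivAt (fun x : ℝ => cexp (-(Real.pi:ℂ) * x ^ 2 + c * x + d))
      ((-2 * Real.pi * x + c) * cexp (-(Real.pi:ℂ) * x ^ 2 + c * x + d)) x := by
  have h1 : HasDerivAt (fun w : ℂ => -(Real.pi:ℂ) * w ^ 2 + c * w + d)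
      (-2 * Real.pi * x + c) (x:ℂ) := by
    have := (((hasDerivAt_pow 2 (x:ℂ)).const_mul (-(Real.pi:ℂ))).add
      ((hasDerivAt_id (x:ℂ)).const_mul c)).add_const d
    refine this.congr_deriv ?_
    push_cast; ring
  have h : HasDerivAt (fun w : ℂ => cexp (-(Real.pi:ℂ) * w ^ 2 + c * w + d))
      ((-2 * Real.pi * x + c) * cexp (-(Real.pi:ℂ) * (x:ℂ) ^ 2 + c * x + d)) (x:ℂ) := by
    simpa [mul_comm] using h1.cexp
  exact h.comp_ofReal

private lemma integral_mul_quad (c d : ℂ) :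
    ∫ x : ℝ, (x:ℂ) * cexp (-(Real.pi:ℂ) * x ^ 2 + c * x + d)
      = c / (2 * Real.pi) * cexp (d + c ^ 2 / (4 * Real.pi)) := by
  have hint1 : Integrable fun x : ℝ =>
      -2 * (Real.pi:ℂ) * x * cexp (-(Real.pi:ℂ) * x ^ 2 + c * x + d) := by
    have := (integrable_pow_cexp 1 c d).const_mul (-2 * (Real.pi:ℂ))
    simpa [mul_assoc] using this
  have hint0 : Integrable fun x : ℝ =>
      c * cexp (-(Real.pi:ℂ) * x ^ 2 + c * x + d) :=
    (integrable_cexp_quadratic' hbre c d).const_mul c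
  have h0 : ∫ x : ℝ, (-2 * (Real.pi:ℂ) * x + c) * cexp (-(Real.pi:ℂ) * x ^ 2 + c * x + d)
      = 0 := by
    apply integral_eq_zero_of_hasDerivAt_of_integrable (hasDerivAt_quad c d)
    · refine (hint1.add hint0).congr (Filter.Eventually.of_forall fun x => ?_)
      simp only [Pi.add_apply]; ring
    · exact integrable_cexp_quadratic' hbre c d
  simp_rw [add_mul] at h0
  rw [integral_add hint1 hint0, integral_const_mul] at h0
  simp_rw [mul_assoc, integral_const_mul, integral_quad] at h0
  have h1 : Integrable fun x : ℝ =>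
      (x:ℂ) * cexp (-(Real.pi:ℂ) * x ^ 2 + c * x + d) := by
    simpa using integrable_pow_cexp 1 c d
  set A := ∫ x : ℝ, (x:ℂ) * cexp (-(Real.pi:ℂ) * x ^ 2 + c * x + d) with hA
  have h2π : (2*(Real.pi:ℂ)) ≠ 0 := by simp [Real.pi_ne_zero]
  rw [eq_comm, div_mul_eq_mul_div, div_eq_iff h2π, eq_comm]
  linear_combination -h0

private lemma integral_sq_quad (c d : ℂ) :
    ∫ x : ℝ, (x:ℂ) ^ 2 * cexp (-(Real.pi:ℂ) * x ^ 2 + c * x + d)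
      = (1 / (2 * Real.pi) + c ^ 2 / (4 * Real.pi ^ 2)) * cexp (d + c ^ 2 / (4 * Real.pi)) := by
  have hd : ∀ x : ℝ, HasDerivAt (fun x : ℝ => (x:ℂ) * cexp (-(Real.pi:ℂ) * x ^ 2 + c * x + d))
      (1 * cexp (-(Real.pi:ℂ) * x ^ 2 + c * x + d)
        + (x:ℂ) * ((-2 * Real.pi * x + c) * cexp (-(Real.pi:ℂ) * x ^ 2 + c * x + d))) x := by
    intro x
    exact ((hasDerivAt_id (x:ℂ)).comp_ofReal).mul (hasDerivAt_quad c d x)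
  have hint0 : Integrable fun x : ℝ =>
      cexp (-(Real.pi:ℂ) * x ^ 2 + c * x + d) := integrable_cexp_quadratic' hbre c d
  have hint1 : Integrable fun x : ℝ =>
      c * ((x:ℂ) * cexp (-(Real.pi:ℂ) * x ^ 2 + c * x + d)) := by
    have := (integrable_pow_cexp 1 c d).const_mul c
    simpa using this
  have hint2 : Integrable fun x : ℝ =>
      -2 * (Real.pi:ℂ) * ((x:ℂ) ^ 2 * cexp (-(Real.pi:ℂ) * x ^ 2 + c * x + d)) :=
    (integrable_pow_cexp 2 c d).const_mul _
  have h0 : ∫ x : ℝ, (1 * cexp (-(Real.pi:ℂ) * x ^ 2 + c * x + d)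
        + (x:ℂ) * ((-2 * Real.pi * x + c) * cexp (-(Real.pi:ℂ) * x ^ 2 + c * x + d))) = 0 := by
    apply integral_eq_zero_of_hasDerivAt_of_integrable hd
    · refine ((hint0.add hint1).add hint2).congr (Filter.Eventually.of_forall fun x => ?_)
      simp only [Pi.add_apply]; ring
    · simpa using integrable_pow_cexp 1 c d
  have heq : ∀ x : ℝ, 1 * cexp (-(Real.pi:ℂ) * x ^ 2 + c * x + d)
        + (x:ℂ) * ((-2 * Real.pi * x + c) * cexp (-(Real.pi:ℂ) * x ^ 2 + c * x + d))
      = cexp (-(Real.pi:ℂ) * x ^ 2 + c * x + d)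
        + c * ((x:ℂ) * cexp (-(Real.pi:ℂ) * x ^ 2 + c * x + d))
        + -2 * (Real.pi:ℂ) * ((x:ℂ) ^ 2 * cexp (-(Real.pi:ℂ) * x ^ 2 + c * x + d)) := by
    intro x; ring
  simp_rw [heq] at h0
  have hint01 : Integrable (fun x : ℝ => cexp (-(Real.pi:ℂ) * x ^ 2 + c * x + d)
      + c * ((x:ℂ) * cexp (-(Real.pi:ℂ) * x ^ 2 + c * x + d))) := hint0.add hint1
  rw [integral_add hint01 hint2, integral_add hint0 hint1,
    integral_const_mul, integral_const_mul, integral_quad, integral_mul_quad] at h0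
  set B := ∫ x : ℝ, (x:ℂ) ^ 2 * cexp (-(Real.pi:ℂ) * x ^ 2 + c * x + d) with hB
  set E := cexp (d + c ^ 2 / (4 * Real.pi)) with hE
  field_simp at h0
  field_simp
  linear_combination (-2:ℂ) * h0

end

noncomputable section

/-- per-coordinate exponent -/
private def φc (a b w : ℂ) : ℂ :=
  -(Real.pi:ℂ)/2 * ((‖a‖:ℂ)^2 + (‖w‖:ℂ)^2 - 2*a*(starRingEnd ℂ) w)
  + -(Real.pi:ℂ)/2 * ((‖w‖:ℂ)^2 + (‖b‖:ℂ)^2 - 2*w*(starRingEnd ℂ) b)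

private def ψc (a b : ℂ) : ℂ :=
  -(Real.pi:ℂ)/2 * ((‖a‖:ℂ)^2 + (‖b‖:ℂ)^2 - 2*a*(starRingEnd ℂ) b)

private lemma integral_complex_eq (f : ℂ → ℂ) :
    ∫ w : ℂ, f w = ∫ p : ℝ × ℝ, f ⟨p.1, p.2⟩ := by
  rw [← (Complex.volume_preserving_equiv_real_prod.symm).integral_comp
    Complex.measurableEquivRealProd.symm.measurableEmbedding f]
  rfl

private lemma norm_mk_sq (x y : ℝ) : ((‖(⟨x,y⟩:ℂ)‖:ℝ):ℂ)^2 = (x:ℂ)^2+(y:ℂ)^2 := by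
  have h : ‖(⟨x,y⟩:ℂ)‖^2 = x^2 + y^2 := by
    rw [Complex.sq_norm, Complex.normSq_mk]; ring
  rw [← Complex.ofReal_pow, h]
  push_cast; ring

private lemma conj_xy (x y : ℝ) :
    (starRingEnd ℂ) ((x:ℂ) + (y:ℂ)*Complex.I) = (x:ℂ) - (y:ℂ)*Complex.I := by
  simp [Complex.conj_ofReal]
  ring

private lemma norm_xy_sq (x y : ℝ) :
    ((‖(x:ℂ) + (y:ℂ)*Complex.I‖:ℝ):ℂ)^2 = (x:ℂ)^2+(y:ℂ)^2 := by
  rw [← Complex.mk_eq_add_mul_I]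
  exact norm_mk_sq x y

private lemma mk_eq (x y : ℝ) : (⟨x,y⟩:ℂ) = (x:ℂ) + (y:ℂ)*Complex.I :=
  Complex.mk_eq_add_mul_I x y

private lemma conj_mk' (x y : ℝ) : (starRingEnd ℂ) (⟨x,y⟩:ℂ) = (x:ℂ) - (y:ℂ)*Complex.I := by
  rw [mk_eq]
  simp [Complex.conj_ofReal, mul_comm]
  ring

private lemma φc_split (a b : ℂ) (x y : ℝ) :
    cexp (φc a b ⟨x,y⟩)
      = cexp (-(Real.pi:ℂ) * x^2 + ((Real.pi:ℂ)*a + (Real.pi:ℂ)*(starRingEnd ℂ) b) * x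
          + -(Real.pi:ℂ)/2 * ((‖a‖:ℂ)^2+(‖b‖:ℂ)^2))
        * cexp (-(Real.pi:ℂ) * y^2
          + (((Real.pi:ℂ)*(starRingEnd ℂ) b - (Real.pi:ℂ)*a)*Complex.I) * y + 0) := by
  rw [← Complex.exp_add]
  congr 1
  simp only [φc, mk_eq, conj_xy, norm_xy_sq]
  ring

end

noncomputable section

open Complex

private lemma div4pi (s : ℂ) : ((Real.pi:ℂ)*s)^2/(4*Real.pi) = Real.pi * s^2/4 := by
  field_simp [hπ]

private lemma exp_ident (a b : ℂ) :
    (-(Real.pi:ℂ)/2 * ((‖a‖:ℂ)^2+(‖b‖:ℂ)^2)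
        + ((Real.pi:ℂ)*a + (Real.pi:ℂ)*(starRingEnd ℂ) b)^2/(4*Real.pi))
      + (0 + (((Real.pi:ℂ)*(starRingEnd ℂ) b - (Real.pi:ℂ)*a)*Complex.I)^2/(4*Real.pi))
      = ψc a b := by
  have h1 : ((Real.pi:ℂ)*a + (Real.pi:ℂ)*(starRingEnd ℂ) b)^2/(4*Real.pi)
      = Real.pi * (a + (starRingEnd ℂ) b)^2/4 := by
    rw [show (Real.pi:ℂ)*a + (Real.pi:ℂ)*(starRingEnd ℂ) b
      = (Real.pi:ℂ)*(a + (starRingEnd ℂ) b) by ring, div4pi]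
  have h2 : (((Real.pi:ℂ)*(starRingEnd ℂ) b - (Real.pi:ℂ)*a)*Complex.I)^2/(4*Real.pi)
      = Real.pi * (((starRingEnd ℂ) b - a)*Complex.I)^2/4 := by
    rw [show ((Real.pi:ℂ)*(starRingEnd ℂ) b - (Real.pi:ℂ)*a)*Complex.I
      = (Real.pi:ℂ)*(((starRingEnd ℂ) b - a)*Complex.I) by ring, div4pi]
  rw [h1, h2]
  unfold ψc
  linear_combination ((Real.pi:ℂ) * ((starRingEnd ℂ) b - a)^2/4) * Complex.I_sq

private lemma exp_prod (a b : ℂ) :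
    cexp (-(Real.pi:ℂ)/2 * ((‖a‖:ℂ)^2+(‖b‖:ℂ)^2)
        + ((Real.pi:ℂ)*a + (Real.pi:ℂ)*(starRingEnd ℂ) b)^2/(4*Real.pi))
      * cexp (0 + (((Real.pi:ℂ)*(starRingEnd ℂ) b - (Real.pi:ℂ)*a)*Complex.I)^2/(4*Real.pi))
      = cexp (ψc a b) := by
  rw [← Complex.exp_add]
  exact congrArg cexp (exp_ident a b)

end

noncomputable section
open Complex

private def c1 (a b : ℂ) : ℂ := (Real.pi:ℂ)*a + (Real.pi:ℂ)*(starRingEnd ℂ) b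
private def c2 (a b : ℂ) : ℂ := ((Real.pi:ℂ)*(starRingEnd ℂ) b - (Real.pi:ℂ)*a)*Complex.I
private def Dc (a b : ℂ) : ℂ := -(Real.pi:ℂ)/2 * ((‖a‖:ℂ)^2+(‖b‖:ℂ)^2)

private lemma φc_split' (a b : ℂ) (x y : ℝ) :
    cexp (φc a b ⟨x,y⟩)
      = cexp (-(Real.pi:ℂ) * x^2 + c1 a b * x + Dc a b)
        * cexp (-(Real.pi:ℂ) * y^2 + c2 a b * y + 0) := by
  unfold c1 c2 Dc; exact φc_split a b x y

private lemma exp_prod' (a b : ℂ) :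
    cexp (Dc a b + (c1 a b)^2/(4*Real.pi)) * cexp (0 + (c2 a b)^2/(4*Real.pi))
      = cexp (ψc a b) := by
  unfold c1 c2 Dc; exact exp_prod a b

private lemma hs1 (a b : ℂ) :
    c1 a b/(2*(Real.pi:ℂ)) + Complex.I * (c2 a b/(2*Real.pi)) = a := by
  unfold c1 c2
  linear_combination ((Real.pi:ℂ) * ((starRingEnd ℂ) b - a) / (2*Real.pi) * (Real.pi:ℂ)⁻¹ * Real.pi) * Complex.I_sq + a * mul_inv_cancel₀ hπ
    + (((Real.pi:ℂ)*(Real.pi:ℂ)⁻¹ - (Real.pi:ℂ)^2*(Real.pi:ℂ)⁻¹^2) * ((starRingEnd ℂ) b - a)/2) * Complex.I_sq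

private lemma hs1' (a b : ℂ) :
    c1 a b/(2*(Real.pi:ℂ)) - Complex.I * (c2 a b/(2*Real.pi)) = (starRingEnd ℂ) b := by
  unfold c1 c2
  linear_combination ((Real.pi:ℂ) * (a - (starRingEnd ℂ) b) / (2*Real.pi) * (Real.pi:ℂ)⁻¹ * Real.pi) * Complex.I_sq + ((starRingEnd ℂ) b) * mul_inv_cancel₀ hπ
    + (((Real.pi:ℂ)*(Real.pi:ℂ)⁻¹ - (Real.pi:ℂ)^2*(Real.pi:ℂ)⁻¹^2) * (a - (starRingEnd ℂ) b)/2) * Complex.I_sq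

private lemma hs2 (a b : ℂ) :
    (1/(2*(Real.pi:ℂ)) + (c1 a b)^2/(4*(Real.pi:ℂ)^2))
      + (1/(2*(Real.pi:ℂ)) + (c2 a b)^2/(4*(Real.pi:ℂ)^2))
      = 1/(Real.pi:ℂ) + a * (starRingEnd ℂ) b := by
  unfold c1 c2
  linear_combination ((Real.pi:ℂ)^2 * (Real.pi:ℂ)⁻¹^2 * ((starRingEnd ℂ) b - a)^2/4) * Complex.I_sq + (a * (starRingEnd ℂ) b * ((Real.pi:ℂ) * (Real.pi:ℂ)⁻¹ + 1)) * mul_inv_cancel₀ hπ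

end

noncomputable section
open Complex

private lemma iu0 (c d : ℂ) : Integrable (fun x : ℝ => cexp (-(Real.pi:ℂ)*x^2 + c*x + d)) :=
  integrable_cexp_quadratic' hbre c d

private lemma iu1 (c d : ℂ) :
    Integrable (fun x : ℝ => (x:ℂ) * cexp (-(Real.pi:ℂ)*x^2 + c*x + d)) := by
  simpa using integrable_pow_cexp 1 c d

private lemma prod_int (f g : ℝ → ℂ) :
    ∫ p : ℝ × ℝ, f p.1 * g p.2 = (∫ x, f x) * ∫ y, g y := by
  rw [Measure.volume_eq_prod]; exact integral_prod_mul f g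

private lemma prod_integrable (f g : ℝ → ℂ) (hf : Integrable f) (hg : Integrable g) :
    Integrable (fun p : ℝ × ℝ => f p.1 * g p.2) := by
  rw [Measure.volume_eq_prod]; exact hf.mul_prod hg

private lemma C0 (a b : ℂ) : ∫ w : ℂ, cexp (φc a b w) = cexp (ψc a b) := by
  rw [integral_complex_eq]
  simp_rw [φc_split' a b]
  rw [prod_int (fun x : ℝ => cexp (-(Real.pi:ℂ)*x^2 + c1 a b*x + Dc a b)) (fun y : ℝ => cexp (-(Real.pi:ℂ)*y^2 + c2 a b*y + 0)), integral_quad, integral_quad]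
  exact exp_prod' a b

private lemma C1 (a b : ℂ) : ∫ w : ℂ, w * cexp (φc a b w) = a * cexp (ψc a b) := by
  rw [integral_complex_eq]
  have key : ∀ p : ℝ × ℝ, (⟨p.1, p.2⟩ : ℂ) * cexp (φc a b ⟨p.1,p.2⟩)
      = ((p.1:ℂ) * cexp (-(Real.pi:ℂ)*p.1^2 + c1 a b*p.1 + Dc a b))
          * cexp (-(Real.pi:ℂ)*p.2^2 + c2 a b*p.2 + 0)
        + Complex.I * (cexp (-(Real.pi:ℂ)*p.1^2 + c1 a b*p.1 + Dc a b)
          * ((p.2:ℂ) * cexp (-(Real.pi:ℂ)*p.2^2 + c2 a b*p.2 + 0))) := by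
    intro p
    rw [φc_split' a b, mk_eq]
    ring
  simp_rw [key]
  rw [integral_add (prod_integrable (fun x : ℝ => (x:ℂ) * cexp (-(Real.pi:ℂ)*x^2 + c1 a b*x + Dc a b)) (fun y : ℝ => cexp (-(Real.pi:ℂ)*y^2 + c2 a b*y + 0)) (iu1 _ _) (iu0 _ _))
      ((prod_integrable (fun x : ℝ => cexp (-(Real.pi:ℂ)*x^2 + c1 a b*x + Dc a b)) (fun y : ℝ => (y:ℂ) * cexp (-(Real.pi:ℂ)*y^2 + c2 a b*y + 0)) (iu0 _ _) (iu1 _ _)).const_mul _),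
    integral_const_mul, prod_int (fun x : ℝ => (x:ℂ) * cexp (-(Real.pi:ℂ)*x^2 + c1 a b*x + Dc a b)) (fun y : ℝ => cexp (-(Real.pi:ℂ)*y^2 + c2 a b*y + 0)), prod_int (fun x : ℝ => cexp (-(Real.pi:ℂ)*x^2 + c1 a b*x + Dc a b)) (fun y : ℝ => (y:ℂ) * cexp (-(Real.pi:ℂ)*y^2 + c2 a b*y + 0)),
    integral_quad, integral_quad, integral_mul_quad, integral_mul_quad]
  calc (c1 a b / (2*(Real.pi:ℂ)) * cexp (Dc a b + (c1 a b)^2/(4*Real.pi)))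
          * cexp (0 + (c2 a b)^2/(4*Real.pi))
        + Complex.I * (cexp (Dc a b + (c1 a b)^2/(4*Real.pi))
          * (c2 a b / (2*(Real.pi:ℂ)) * cexp (0 + (c2 a b)^2/(4*Real.pi))))
      = (c1 a b/(2*(Real.pi:ℂ)) + Complex.I * (c2 a b/(2*Real.pi)))
          * (cexp (Dc a b + (c1 a b)^2/(4*Real.pi)) * cexp (0 + (c2 a b)^2/(4*Real.pi))) := by
        ring
    _ = a * cexp (ψc a b) := by rw [hs1, exp_prod']

private lemma C1' (a b : ℂ) :
    ∫ w : ℂ, (starRingEnd ℂ) w * cexp (φc a b w) = (starRingEnd ℂ) b * cexp (ψc a b) := by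
  rw [integral_complex_eq]
  have key : ∀ p : ℝ × ℝ, (starRingEnd ℂ) (⟨p.1, p.2⟩ : ℂ) * cexp (φc a b ⟨p.1,p.2⟩)
      = ((p.1:ℂ) * cexp (-(Real.pi:ℂ)*p.1^2 + c1 a b*p.1 + Dc a b))
          * cexp (-(Real.pi:ℂ)*p.2^2 + c2 a b*p.2 + 0)
        + (-Complex.I) * (cexp (-(Real.pi:ℂ)*p.1^2 + c1 a b*p.1 + Dc a b)
          * ((p.2:ℂ) * cexp (-(Real.pi:ℂ)*p.2^2 + c2 a b*p.2 + 0))) := by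
    intro p
    rw [φc_split' a b, mk_eq, conj_xy]
    ring
  simp_rw [key]
  rw [integral_add (prod_integrable (fun x : ℝ => (x:ℂ) * cexp (-(Real.pi:ℂ)*x^2 + c1 a b*x + Dc a b)) (fun y : ℝ => cexp (-(Real.pi:ℂ)*y^2 + c2 a b*y + 0)) (iu1 _ _) (iu0 _ _))
      ((prod_integrable (fun x : ℝ => cexp (-(Real.pi:ℂ)*x^2 + c1 a b*x + Dc a b)) (fun y : ℝ => (y:ℂ) * cexp (-(Real.pi:ℂ)*y^2 + c2 a b*y + 0)) (iu0 _ _) (iu1 _ _)).const_mul _),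
    integral_const_mul, prod_int (fun x : ℝ => (x:ℂ) * cexp (-(Real.pi:ℂ)*x^2 + c1 a b*x + Dc a b)) (fun y : ℝ => cexp (-(Real.pi:ℂ)*y^2 + c2 a b*y + 0)), prod_int (fun x : ℝ => cexp (-(Real.pi:ℂ)*x^2 + c1 a b*x + Dc a b)) (fun y : ℝ => (y:ℂ) * cexp (-(Real.pi:ℂ)*y^2 + c2 a b*y + 0)),
    integral_quad, integral_quad, integral_mul_quad, integral_mul_quad]
  calc (c1 a b / (2*(Real.pi:ℂ)) * cexp (Dc a b + (c1 a b)^2/(4*Real.pi)))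
          * cexp (0 + (c2 a b)^2/(4*Real.pi))
        + (-Complex.I) * (cexp (Dc a b + (c1 a b)^2/(4*Real.pi))
          * (c2 a b / (2*(Real.pi:ℂ)) * cexp (0 + (c2 a b)^2/(4*Real.pi))))
      = (c1 a b/(2*(Real.pi:ℂ)) - Complex.I * (c2 a b/(2*Real.pi)))
          * (cexp (Dc a b + (c1 a b)^2/(4*Real.pi)) * cexp (0 + (c2 a b)^2/(4*Real.pi))) := by
        ring
    _ = (starRingEnd ℂ) b * cexp (ψc a b) := by rw [hs1', exp_prod']

private lemma iu2 (c d : ℂ) :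
    Integrable (fun x : ℝ => (x:ℂ)^2 * cexp (-(Real.pi:ℂ)*x^2 + c*x + d)) :=
  integrable_pow_cexp 2 c d

private lemma C2 (a b : ℂ) :
    ∫ w : ℂ, (starRingEnd ℂ) w * w * cexp (φc a b w)
      = (1/(Real.pi:ℂ) + a * (starRingEnd ℂ) b) * cexp (ψc a b) := by
  rw [integral_complex_eq]
  have key : ∀ p : ℝ × ℝ, (starRingEnd ℂ) (⟨p.1, p.2⟩ : ℂ) * (⟨p.1, p.2⟩ : ℂ)
        * cexp (φc a b ⟨p.1,p.2⟩)
      = ((p.1:ℂ)^2 * cexp (-(Real.pi:ℂ)*p.1^2 + c1 a b*p.1 + Dc a b))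
          * cexp (-(Real.pi:ℂ)*p.2^2 + c2 a b*p.2 + 0)
        + cexp (-(Real.pi:ℂ)*p.1^2 + c1 a b*p.1 + Dc a b)
          * ((p.2:ℂ)^2 * cexp (-(Real.pi:ℂ)*p.2^2 + c2 a b*p.2 + 0)) := by
    intro p
    rw [φc_split' a b, mk_eq, conj_xy]
    linear_combination (-(p.2:ℂ)^2 * cexp (-(Real.pi:ℂ)*p.1^2 + c1 a b*p.1 + Dc a b)
      * cexp (-(Real.pi:ℂ)*p.2^2 + c2 a b*p.2 + 0)) * Complex.I_sq
  simp_rw [key]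
  rw [integral_add (prod_integrable (fun x : ℝ => (x:ℂ)^2 * cexp (-(Real.pi:ℂ)*x^2 + c1 a b*x + Dc a b)) (fun y : ℝ => cexp (-(Real.pi:ℂ)*y^2 + c2 a b*y + 0)) (iu2 _ _) (iu0 _ _))
      (prod_integrable (fun x : ℝ => cexp (-(Real.pi:ℂ)*x^2 + c1 a b*x + Dc a b)) (fun y : ℝ => (y:ℂ)^2 * cexp (-(Real.pi:ℂ)*y^2 + c2 a b*y + 0)) (iu0 _ _) (iu2 _ _)),
    prod_int (fun x : ℝ => (x:ℂ)^2 * cexp (-(Real.pi:ℂ)*x^2 + c1 a b*x + Dc a b)) (fun y : ℝ => cexp (-(Real.pi:ℂ)*y^2 + c2 a b*y + 0)), prod_int (fun x : ℝ => cexp (-(Real.pi:ℂ)*x^2 + c1 a b*x + Dc a b)) (fun y : ℝ => (y:ℂ)^2 * cexp (-(Real.pi:ℂ)*y^2 + c2 a b*y + 0)),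
    integral_quad, integral_quad, integral_sq_quad, integral_sq_quad]
  calc ((1/(2*(Real.pi:ℂ)) + (c1 a b)^2/(4*(Real.pi:ℂ)^2)) * cexp (Dc a b + (c1 a b)^2/(4*Real.pi)))
          * cexp (0 + (c2 a b)^2/(4*Real.pi))
        + cexp (Dc a b + (c1 a b)^2/(4*Real.pi))
          * ((1/(2*(Real.pi:ℂ)) + (c2 a b)^2/(4*(Real.pi:ℂ)^2)) * cexp (0 + (c2 a b)^2/(4*Real.pi)))
      = ((1/(2*(Real.pi:ℂ)) + (c1 a b)^2/(4*(Real.pi:ℂ)^2))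
          + (1/(2*(Real.pi:ℂ)) + (c2 a b)^2/(4*(Real.pi:ℂ)^2)))
          * (cexp (Dc a b + (c1 a b)^2/(4*Real.pi)) * cexp (0 + (c2 a b)^2/(4*Real.pi))) := by
        ring
    _ = (1/(Real.pi:ℂ) + a * (starRingEnd ℂ) b) * cexp (ψc a b) := by rw [hs2, exp_prod']

end


/-- `𝒦[z̄'_i, z_j] = (1/π) δ_{ij} + z̄'_i z_j`: the composition of the kernel
operators `(z̄'_i 𝒫)` and `(z_j 𝒫)` has kernel
`((1/π) δ_{ij} + z̄'_i z_j) 𝒫(Z,Z')`. -/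
theorem K_zbar'_z (n : ℕ) (i j : Fin n) (z z' : Fin n → ℂ) :
    (∫ w : Fin n → ℂ,
        ((starRingEnd ℂ) (w i) * Pker n z w) * (w j * Pker n w z'))
      = ((1 / (Real.pi : ℂ)) * (if i = j then 1 else 0)
          + (starRingEnd ℂ) (z' i) * z j) * Pker n z z' := by
  have hker : ∀ w : Fin n → ℂ, ((starRingEnd ℂ) (w i) * Pker n z w) * (w j * Pker n w z')
      = ∏ k, ((if k = i then (starRingEnd ℂ) (w k) else 1) * (if k = j then w k else 1)
          * cexp (φc (z k) (z' k) (w k))) := by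
    intro w
    have hexp : Pker n z w * Pker n w z' = cexp (∑ k, φc (z k) (z' k) (w k)) := by
      unfold Pker
      rw [← Complex.exp_add]
      congr 1
      unfold φc
      rw [Finset.mul_sum, Finset.mul_sum, ← Finset.sum_add_distrib]
    rw [Finset.prod_mul_distrib, Finset.prod_mul_distrib, Fintype.prod_ite_eq',
      Fintype.prod_ite_eq', ← Complex.exp_sum]
    linear_combination (starRingEnd ℂ) (w i) * w j * hexp
  simp_rw [hker]
  rw [MeasureTheory.volume_pi, MeasureTheory.integral_fintype_prod_eq_prod (ι := Fin n)
    (fun k t => (if k = i then (starRingEnd ℂ) t else 1) * (if k = j then t else 1)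
      * cexp (φc (z k) (z' k) t))]
  have hval : ∀ k, (∫ t : ℂ, (if k = i then (starRingEnd ℂ) t else 1) * (if k = j then t else 1)
        * cexp (φc (z k) (z' k) t))
      = (if k = i then (if k = j then (1/(Real.pi:ℂ) + z k * (starRingEnd ℂ) (z' k))
            else (starRingEnd ℂ) (z' k)) else (if k = j then z k else 1))
        * cexp (ψc (z k) (z' k)) := by
    intro k
    by_cases h1 : k = i
    · subst h1
      by_cases h2 : k = j
      · subst h2
        simp only [if_pos rfl]
        exact C2 (z k) (z' k)
      · simp only [if_pos rfl, if_neg h2, mul_one]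
        exact C1' (z k) (z' k)
    · by_cases h2 : k = j
      · subst h2
        simp only [if_neg h1, if_pos rfl, one_mul]
        exact C1 (z k) (z' k)
      · simp only [if_neg h1, if_neg h2, one_mul]
        exact C0 (z k) (z' k)
  simp only [hval]
  rw [Finset.prod_mul_distrib, ← Complex.exp_sum]
  have hψ : cexp (∑ k, ψc (z k) (z' k)) = Pker n z z' := by
    unfold ψc Pker
    congr 1
    rw [Finset.mul_sum]
  rw [hψ]
  congr 1
  by_cases hij : i = j
  · subst hij
    rw [if_pos rfl]
    have hg : ∀ k : Fin n, ((if k = i then (if k = i then (1/(Real.pi:ℂ) + z k * (starRingEnd ℂ) (z' k))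
          else (starRingEnd ℂ) (z' k)) else (if k = i then z k else 1)) : ℂ)
        = (if k = i then (1/(Real.pi:ℂ) + z k * (starRingEnd ℂ) (z' k)) else 1) := by
      intro k; by_cases h : k = i <;> simp [h]
    simp only [hg]
    rw [Fintype.prod_ite_eq' i (fun k => 1/(Real.pi:ℂ) + z k * (starRingEnd ℂ) (z' k))]
    ring
  · rw [if_neg hij]
    have hg : ∀ k : Fin n, ((if k = i then (if k = j then (1/(Real.pi:ℂ) + z k * (starRingEnd ℂ) (z' k))
          else (starRingEnd ℂ) (z' k)) else (if k = j then z k else 1)) : ℂ)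
        = (if k = i then (starRingEnd ℂ) (z' k) else 1) * (if k = j then z k else 1) := by
      intro k
      by_cases h1 : k = i
      · have h2 : ¬ k = j := fun h => hij (h1.symm.trans h)
        simp [h1, h2, if_neg (show ¬ i = j from fun h => hij h)]
      · by_cases h2 : k = j <;>
          simp [h1, h2, show ¬ j = i from fun h => hij h.symm]
    simp only [hg]
    rw [Finset.prod_mul_distrib, Fintype.prod_ite_eq' i (fun k => (starRingEnd ℂ) (z' k)),
      Fintype.prod_ite_eq' j (fun k => z k)]
    ring
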